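/- Let F be a finite field with −1 not a square, and 𝒫 ⊆ F^3 the paraboloid. For all A, B ⊆ 𝒫, the number of additive quadruples |{(a,b,c,d) ∈ A × B × A × B : a + b = c + d}| is at most 2·min(|A|^{1/2}|B|^2 + |A||B|, |A||B|^{3/2} + |B|^2). -/

import Mathlib

section AuxScalar
variable {F : Type} [Field F]

lemma norm_ne_zero (hsq : ¬ ∃ x : F, x ^ 2 = -1) {w1 w2 : F} (hw : ¬ (w1 = 0 ∧ w2 = 0)) :
    w1 ^ 2 + w2 ^ 2 ≠ 0 := by
  intro h
  rcases eq_or_ne w2 0 with h2 | h2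
  · rcases eq_or_ne w1 0 with h1 | h1
    · exact hw ⟨h1, h2⟩
    · apply h1
      have hsq1 : w1 ^ 2 = 0 := by rw [h2] at h; linear_combination h
      exact pow_eq_zero_iff (by norm_num) |>.mp hsq1
  · exact hsq ⟨w1 / w2, by field_simp; linear_combination h⟩

lemma collinear_of_det {u1 u2 v1 v2 : F} (hu : ¬ (u1 = 0 ∧ u2 = 0))
    (hdet : u1 * v2 - u2 * v1 = 0) : ∃ l, v1 = l * u1 ∧ v2 = l * u2 := by
  rcases eq_or_ne u1 0 with h1 | h1
  · have h2 : u2 ≠ 0 := fun h => hu ⟨h1, h⟩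
    have hv1 : v1 = 0 := by
      have : u2 * v1 = 0 := by linear_combination -hdet + v2 * h1
      exact (mul_eq_zero.mp this).resolve_left h2
    exact ⟨v2 / u2, by rw [hv1, h1, mul_zero], (div_mul_cancel₀ v2 h2).symm⟩
  · refine ⟨v1 / u1, (div_mul_cancel₀ v1 h1).symm, ?_⟩
    have : v2 * u1 = v1 * u2 := by linear_combination hdet
    field_simp
    linear_combination this

lemma det_zero_of_orth {w1 w2 u1 u2 v1 v2 : F} (hw : ¬ (w1 = 0 ∧ w2 = 0))
    (hu : w1 * u1 + w2 * u2 = 0) (hv : w1 * v1 + w2 * v2 = 0) :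
    u1 * v2 - u2 * v1 = 0 := by
  have d1 : (u1 * v2 - u2 * v1) * w1 = 0 := by linear_combination v2 * hu - u2 * hv
  have d2 : (u1 * v2 - u2 * v1) * w2 = 0 := by linear_combination u1 * hv - v1 * hu
  rcases eq_or_ne w1 0 with h1 | h1
  · have h2 : w2 ≠ 0 := fun h => hw ⟨h1, h⟩
    exact (mul_eq_zero.mp d2).resolve_right h2
  · exact (mul_eq_zero.mp d1).resolve_right h1

/-- branch-1 uniqueness: the common point α of the two line conditions is unique. -/
lemma uniq_a (hsq : ¬ ∃ x : F, x ^ 2 = -1) {β1 β2 δ1 δ2 δ1' δ2' a1 a2 b1 b2 : F}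
    (hδ : ¬ (δ1 = β1 ∧ δ2 = β2)) (hδ' : ¬ (δ1' = β1 ∧ δ2' = β2))
    (hδδ : ¬ (δ1 = δ1' ∧ δ2 = δ2'))
    (E1 : (δ1 - a1) * (δ1 - β1) + (δ2 - a2) * (δ2 - β2) = 0)
    (E2 : (δ1' - a1) * (δ1' - β1) + (δ2' - a2) * (δ2' - β2) = 0)
    (E3 : (δ1 - b1) * (δ1 - β1) + (δ2 - b2) * (δ2 - β2) = 0)
    (E4 : (δ1' - b1) * (δ1' - β1) + (δ2' - b2) * (δ2' - β2) = 0) :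
    a1 = b1 ∧ a2 = b2 := by
  have wu : (b1 - a1) * (δ1 - β1) + (b2 - a2) * (δ2 - β2) = 0 := by linear_combination E1 - E3
  have wv : (b1 - a1) * (δ1' - β1) + (b2 - a2) * (δ2' - β2) = 0 := by linear_combination E2 - E4
  rcases eq_or_ne ((δ1 - β1) * (δ2' - β2) - (δ2 - β2) * (δ1' - β1)) 0 with hdet | hdet
  · exfalso
    have hu : ¬ ((δ1 - β1) = 0 ∧ (δ2 - β2) = 0) := by
      rintro ⟨p, q⟩; exact hδ ⟨by linear_combination p, by linear_combination q⟩
    have hv : ¬ ((δ1' - β1) = 0 ∧ (δ2' - β2) = 0) := by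
      rintro ⟨p, q⟩; exact hδ' ⟨by linear_combination p, by linear_combination q⟩
    obtain ⟨l, hl1, hl2⟩ := collinear_of_det hu hdet
    have hl0 : l ≠ 0 := by
      rintro rfl
      rw [zero_mul] at hl1 hl2
      exact hv ⟨hl1, hl2⟩
    have k2' : l * ((δ1' - a1) * (δ1 - β1) + (δ2' - a2) * (δ2 - β2)) = 0 := by
      linear_combination E2 - (δ1' - a1) * hl1 - (δ2' - a2) * hl2
    have k2'' := (mul_eq_zero.mp k2').resolve_left hl0
    have k3 : (δ1 - δ1') * (δ1 - β1) + (δ2 - δ2') * (δ2 - β2) = 0 := by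
      linear_combination E1 - k2''
    have final : (1 - l) * ((δ1 - β1) ^ 2 + (δ2 - β2) ^ 2) = 0 := by
      linear_combination k3 + (δ1 - β1) * hl1 + (δ2 - β2) * hl2
    have hn := norm_ne_zero hsq hu
    have hl1' : l = 1 := by
      have := (mul_eq_zero.mp final).resolve_right hn
      linear_combination -this
    rw [hl1', one_mul] at hl1 hl2
    exact hδδ ⟨by linear_combination -hl1, by linear_combination -hl2⟩
  · have w1 : (b1 - a1) * ((δ1 - β1) * (δ2' - β2) - (δ2 - β2) * (δ1' - β1)) = 0 := by
      linear_combination (δ2' - β2) * wu - (δ2 - β2) * wv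
    have w2 : (b2 - a2) * ((δ1 - β1) * (δ2' - β2) - (δ2 - β2) * (δ1' - β1)) = 0 := by
      linear_combination (δ1 - β1) * wv - (δ1' - β1) * wu
    have e1' := (mul_eq_zero.mp w1).resolve_right hdet
    have e2' := (mul_eq_zero.mp w2).resolve_right hdet
    exact ⟨by linear_combination -e1', by linear_combination -e2'⟩

/-- branch-2 uniqueness: the point δ ≠ β on the circle through the two line conditions
is unique. -/
lemma uniq_d (hsq : ¬ ∃ x : F, x ^ 2 = -1) {β1 β2 δ1 δ2 δ1' δ2' a1 a2 b1 b2 : F}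
    (hab : ¬ (a1 = b1 ∧ a2 = b2))
    (hδ : ¬ (δ1 = β1 ∧ δ2 = β2)) (hδ' : ¬ (δ1' = β1 ∧ δ2' = β2))
    (E1 : (δ1 - a1) * (δ1 - β1) + (δ2 - a2) * (δ2 - β2) = 0)
    (E2 : (δ1 - b1) * (δ1 - β1) + (δ2 - b2) * (δ2 - β2) = 0)
    (E3 : (δ1' - a1) * (δ1' - β1) + (δ2' - a2) * (δ2' - β2) = 0)
    (E4 : (δ1' - b1) * (δ1' - β1) + (δ2' - b2) * (δ2' - β2) = 0) :
    δ1 = δ1' ∧ δ2 = δ2' := by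
  have hw : ¬ ((b1 - a1) = 0 ∧ (b2 - a2) = 0) := by
    rintro ⟨p, q⟩; exact hab ⟨by linear_combination -p, by linear_combination -q⟩
  have p1 : (b1 - a1) * (δ1 - β1) + (b2 - a2) * (δ2 - β2) = 0 := by linear_combination E1 - E2
  have p2 : (b1 - a1) * (δ1' - β1) + (b2 - a2) * (δ2' - β2) = 0 := by linear_combination E3 - E4
  have hdet := det_zero_of_orth hw p1 p2
  have hu : ¬ ((δ1 - β1) = 0 ∧ (δ2 - β2) = 0) := by
    rintro ⟨p, q⟩; exact hδ ⟨by linear_combination p, by linear_combination q⟩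
  have hv : ¬ ((δ1' - β1) = 0 ∧ (δ2' - β2) = 0) := by
    rintro ⟨p, q⟩; exact hδ' ⟨by linear_combination p, by linear_combination q⟩
  obtain ⟨l, hl1, hl2⟩ := collinear_of_det hu hdet
  have hl0 : l ≠ 0 := by
    rintro rfl
    rw [zero_mul] at hl1 hl2
    exact hv ⟨hl1, hl2⟩
  have q1 : ((δ1 - β1) ^ 2 + (δ2 - β2) ^ 2) + (β1 - a1) * (δ1 - β1) + (β2 - a2) * (δ2 - β2)
      = 0 := by linear_combination E1
  have q3' : l * (l * ((δ1 - β1) ^ 2 + (δ2 - β2) ^ 2) + (β1 - a1) * (δ1 - β1)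
      + (β2 - a2) * (δ2 - β2)) = 0 := by
    linear_combination E3 - ((δ1' - β1) + l * (δ1 - β1) + (β1 - a1)) * hl1
      - ((δ2' - β2) + l * (δ2 - β2) + (β2 - a2)) * hl2
  have q3 := (mul_eq_zero.mp q3').resolve_left hl0
  have final : (l - 1) * ((δ1 - β1) ^ 2 + (δ2 - β2) ^ 2) = 0 := by
    linear_combination q3 - q1
  have hn := norm_ne_zero hsq hu
  have hl1' : l = 1 := by
    have := (mul_eq_zero.mp final).resolve_right hn
    linear_combination this
  rw [hl1', one_mul] at hl1 hl2
  exact ⟨by linear_combination -hl1, by linear_combination -hl2⟩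

end AuxScalar

def paraboloid3 (F : Type) [Field F] : Set ((F × F) × F) :=
  {p | p.2 = p.1.1 ^ 2 + p.1.2 ^ 2}

/-- the key algebraic condition: `a + b - d` lies on the paraboloid. -/
def QQ (F : Type) [Field F] (a b d : (F × F) × F) : Prop :=
  (d.1.1 - a.1.1) * (d.1.1 - b.1.1) + (d.1.2 - a.1.2) * (d.1.2 - b.1.2) = 0

section AuxPoint
variable {F : Type} [Field F]

lemma para_eq {p q : (F × F) × F} (hp : p ∈ paraboloid3 F) (hq : q ∈ paraboloid3 F)
    (h1 : p.1.1 = q.1.1) (h2 : p.1.2 = q.1.2) : p = q := by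
  have hp' : p.2 = p.1.1 ^ 2 + p.1.2 ^ 2 := hp
  have hq' : q.2 = q.1.1 ^ 2 + q.1.2 ^ 2 := hq
  exact Prod.ext (Prod.ext h1 h2) (by rw [hp', hq', h1, h2])

lemma para_ne {p q : (F × F) × F} (hp : p ∈ paraboloid3 F) (hq : q ∈ paraboloid3 F)
    (h : p ≠ q) : ¬ (p.1.1 = q.1.1 ∧ p.1.2 = q.1.2) := by
  rintro ⟨h1, h2⟩; exact h (para_eq hp hq h1 h2)

lemma para_step (hchar : ringChar F ≠ 2) {a b d : (F × F) × F}
    (ha : a ∈ paraboloid3 F) (hb : b ∈ paraboloid3 F) (hd : d ∈ paraboloid3 F)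
    (h : a + b - d ∈ paraboloid3 F) : QQ F a b d := by
  have ha' : a.2 = a.1.1 ^ 2 + a.1.2 ^ 2 := ha
  have hb' : b.2 = b.1.1 ^ 2 + b.1.2 ^ 2 := hb
  have hd' : d.2 = d.1.1 ^ 2 + d.1.2 ^ 2 := hd
  have h' : a.2 + b.2 - d.2 = (a.1.1 + b.1.1 - d.1.1) ^ 2 + (a.1.2 + b.1.2 - d.1.2) ^ 2 := h
  have h2 : (2 : F) ≠ 0 := Ring.two_ne_zero hchar
  have key : (2 : F) * ((d.1.1 - a.1.1) * (d.1.1 - b.1.1)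
      + (d.1.2 - a.1.2) * (d.1.2 - b.1.2)) = 0 := by
    linear_combination ha' + hb' - hd' - h'
  exact (mul_eq_zero.mp key).resolve_left h2

/-- point-level version of `uniq_a`. -/
lemma uniq_a' (hsq : ¬ ∃ x : F, x ^ 2 = -1) {a a' b d d' : (F × F) × F}
    (haP : a ∈ paraboloid3 F) (haP' : a' ∈ paraboloid3 F)
    (hbP : b ∈ paraboloid3 F) (hdP : d ∈ paraboloid3 F) (hdP' : d' ∈ paraboloid3 F)
    (hdb : d ≠ b) (hd'b : d' ≠ b) (hdd : d ≠ d')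
    (h1 : QQ F a b d) (h2 : QQ F a b d') (h3 : QQ F a' b d) (h4 : QQ F a' b d') :
    a = a' := by
  obtain ⟨e1, e2⟩ := uniq_a hsq (para_ne hdP hbP hdb) (para_ne hdP' hbP hd'b)
    (para_ne hdP hdP' hdd) h1 h2 h3 h4
  exact para_eq haP haP' e1 e2

/-- point-level version of `uniq_d`. -/
lemma uniq_d' (hsq : ¬ ∃ x : F, x ^ 2 = -1) {a a' b d d' : (F × F) × F}
    (haP : a ∈ paraboloid3 F) (haP' : a' ∈ paraboloid3 F)
    (hbP : b ∈ paraboloid3 F) (hdP : d ∈ paraboloid3 F) (hdP' : d' ∈ paraboloid3 F)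
    (haa : a ≠ a') (hdb : d ≠ b) (hd'b : d' ≠ b)
    (h1 : QQ F a b d) (h2 : QQ F a' b d) (h3 : QQ F a b d') (h4 : QQ F a' b d') :
    d = d' := by
  obtain ⟨e1, e2⟩ := uniq_d hsq (para_ne haP haP' haa) (para_ne hdP hbP hdb)
    (para_ne hdP' hbP hd'b) h1 h2 h3 h4
  exact para_eq hdP hdP' e1 e2

/-- solving the Cauchy–Schwarz quadratic inequality. -/
lemma quad_solve {T m c : ℝ} (hT : 0 ≤ T) (hm : 0 ≤ m) (hc : 0 ≤ c)
    (h : T ^ 2 ≤ m * (T + c)) : T ≤ m + Real.sqrt (m * c) := by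
  set s := Real.sqrt (m * c) with hs
  have hs2 : s ^ 2 = m * c := Real.sq_sqrt (by positivity)
  have hs0 : 0 ≤ s := Real.sqrt_nonneg _
  nlinarith [sq_nonneg (T - m - s), mul_nonneg hm hs0, mul_nonneg hT hs0]

end AuxPoint

set_option maxHeartbeats 2000000 in
/-- for A, B ⊆ 𝒫 ⊆ F³, the number of additive quadruples
(a,b,c,d) ∈ A × B × A × B with a + b = c + d is at most
2·min(|A|^{1/2}|B|² + |A||B|, |A||B|^{3/2} + |B|²). -/
theorem quadruple_count_bound (F : Type) [Field F] [Fintype F]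
    (hchar : ringChar F ≠ 2) (hsq : ¬ ∃ x : F, x ^ 2 = -1)
    (A B : Set ((F × F) × F))
    (hA : A ⊆ paraboloid3 F) (hB : B ⊆ paraboloid3 F) :
    (({q : (((F × F) × F) × ((F × F) × F)) × (((F × F) × F) × ((F × F) × F)) |
        q.1.1 ∈ A ∧ q.1.2 ∈ B ∧ q.2.1 ∈ A ∧ q.2.2 ∈ B ∧
          q.1.1 + q.1.2 = q.2.1 + q.2.2}).ncard : ℝ) ≤
      2 * min ((A.ncard : ℝ) ^ ((1 : ℝ) / 2) * (B.ncard : ℝ) ^ 2 + (A.ncard : ℝ) * (B.ncard : ℝ))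
          ((A.ncard : ℝ) * (B.ncard : ℝ) ^ ((3 : ℝ) / 2) + (B.ncard : ℝ) ^ 2) := by
  classical
  have hAfin : A.Finite := A.toFinite
  have hBfin : B.Finite := B.toFinite
  set Af := hAfin.toFinset with hAfdef
  set Bf := hBfin.toFinset with hBfdef
  set S : Set ((((F × F) × F) × ((F × F) × F)) × (((F × F) × F) × ((F × F) × F))) :=
    {q | q.1.1 ∈ A ∧ q.1.2 ∈ B ∧ q.2.1 ∈ A ∧ q.2.2 ∈ B ∧
          q.1.1 + q.1.2 = q.2.1 + q.2.2} with hSdef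
  set W' : Finset ((((F × F) × F) × ((F × F) × F)) × ((F × F) × F)) :=
    ((Af ×ˢ Bf) ×ˢ Bf).filter (fun x => QQ F x.1.1 x.1.2 x.2) with hW'
  set W2 : Finset ((((F × F) × F) × ((F × F) × F)) × ((F × F) × F)) :=
    W'.filter (fun x => ¬ x.2 = x.1.2) with hW2
  -- Step 1 : the number of quadruples is at most the cardinality of W'
  have hstep1 : S.ncard ≤ W'.card := by
    rw [Set.ncard_eq_toFinset_card _ (Set.toFinite S)]
    apply Finset.card_le_card_of_injOn (fun q => ((q.1.1, q.1.2), q.2.2))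
    · intro q hq
      rw [Finset.mem_coe, Set.Finite.mem_toFinset] at hq
      obtain ⟨h1, h2, h3, h4, h5⟩ := hq
      simp only [hW', hAfdef, hBfdef, Finset.mem_coe, Finset.mem_filter, Finset.mem_product,
        Set.Finite.mem_toFinset]
      refine ⟨⟨⟨h1, h2⟩, h4⟩, ?_⟩
      apply para_step hchar (hA h1) (hB h2) (hB h4)
      have he : q.1.1 + q.1.2 - q.2.2 = q.2.1 := by rw [h5]; abel
      rw [he]; exact hA h3
    · intro q hq q' hq' he
      rw [Set.Finite.coe_toFinset] at hq hq'
      obtain ⟨_, _, _, _, h5⟩ := hq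
      obtain ⟨_, _, _, _, h5'⟩ := hq'
      simp only [Prod.mk.injEq] at he
      obtain ⟨⟨e1, e2⟩, e3⟩ := he
      have e4 : q.2.1 = q'.2.1 := by
        have u1 : q.2.1 = q.1.1 + q.1.2 - q.2.2 := by rw [h5]; abel
        have u2 : q'.2.1 = q'.1.1 + q'.1.2 - q'.2.2 := by rw [h5']; abel
        rw [u1, u2, e1, e2, e3]
      exact Prod.ext (Prod.ext e1 e2) (Prod.ext e4 e3)
  -- split W' into diagonal (b = d) and off-diagonal parts
  have hsplit : (W'.filter (fun x => x.2 = x.1.2)).card + W2.card = W'.card := by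
    rw [hW2]
    exact Finset.card_filter_add_card_filter_not _
  have hWd : (W'.filter (fun x => x.2 = x.1.2)).card ≤ Af.card * Bf.card := by
    rw [← Finset.card_product]
    apply Finset.card_le_card_of_injOn (fun x => x.1)
    · intro x hx
      simp only [hW', Finset.mem_coe, Finset.mem_filter, Finset.mem_product] at hx
      exact Finset.mem_product.mpr ⟨hx.1.1.1.1, hx.1.1.1.2⟩
    · intro x hx y hy he
      simp only [Finset.coe_filter, Set.mem_setOf_eq] at hx hy
      have he' : x.1 = y.1 := he
      exact Prod.ext he' (by rw [hx.2, hy.2, he'])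
  have hAm : ∀ p, p ∈ Af → p ∈ paraboloid3 F := fun p hp => hA (hAfin.mem_toFinset.mp hp)
  have hBm : ∀ p, p ∈ Bf → p ∈ paraboloid3 F := fun p hp => hB (hBfin.mem_toFinset.mp hp)
  -- Branch 1 : fibering over (a, b)
  set k : (((F × F) × F) × ((F × F) × F)) → ℕ :=
    fun y => (Bf.filter (fun d => ¬ d = y.2 ∧ QQ F y.1 y.2 d)).card with hk
  have hT1 : W2.card = ∑ y ∈ Af ×ˢ Bf, k y := by
    rw [Finset.card_eq_sum_card_fiberwise (f := Prod.fst) (t := Af ×ˢ Bf) (fun x hx => by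
      simp only [hW2, hW', Finset.mem_coe, Finset.mem_filter, Finset.mem_product] at hx
      exact Finset.mem_product.mpr ⟨hx.1.1.1.1, hx.1.1.1.2⟩)]
    refine Finset.sum_congr rfl (fun y hy => ?_)
    simp only [hk]
    apply Finset.card_bij (fun x (_ : x ∈ W2.filter (fun x => x.1 = y)) => x.2)
    · intro x hx
      simp only [hW2, hW', Finset.mem_filter, Finset.mem_product] at hx
      obtain ⟨⟨⟨⟨⟨ha1, hb1⟩, hb2⟩, hQ⟩, hne⟩, hfib⟩ := hx
      subst hfib
      exact Finset.mem_filter.mpr ⟨hb2, hne, hQ⟩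
    · intro x hx x' hx' he
      simp only [Finset.mem_filter] at hx hx'
      exact Prod.ext (hx.2.trans hx'.2.symm) he
    · intro d hd
      simp only [Finset.mem_filter] at hd
      obtain ⟨hdB, hne, hQ⟩ := hd
      refine ⟨(y, d), Finset.mem_filter.mpr ⟨?_, rfl⟩, rfl⟩
      simp only [hW2, hW', Finset.mem_filter, Finset.mem_product]
      obtain ⟨hy1, hy2⟩ := Finset.mem_product.mp hy
      exact ⟨⟨⟨⟨hy1, hy2⟩, hdB⟩, hQ⟩, hne⟩
  set V : Finset ((((F × F) × F) × ((F × F) × F)) × (((F × F) × F) × ((F × F) × F))) :=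
    ((Af ×ˢ Bf) ×ˢ (Bf ×ˢ Bf)).filter (fun x =>
      (¬ x.2.1 = x.1.2 ∧ QQ F x.1.1 x.1.2 x.2.1) ∧
      (¬ x.2.2 = x.1.2 ∧ QQ F x.1.1 x.1.2 x.2.2)) with hV
  have hVcard : V.card = ∑ y ∈ Af ×ˢ Bf, k y * k y := by
    rw [Finset.card_eq_sum_card_fiberwise (f := Prod.fst) (t := Af ×ˢ Bf) (fun x hx => by
      simp only [hV, Finset.mem_coe, Finset.mem_filter, Finset.mem_product] at hx
      exact Finset.mem_product.mpr ⟨hx.1.1.1, hx.1.1.2⟩)]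
    refine Finset.sum_congr rfl (fun y hy => ?_)
    simp only [hk]
    rw [← Finset.card_product]
    apply Finset.card_bij (fun x (_ : x ∈ V.filter (fun x => x.1 = y)) => x.2)
    · intro x hx
      simp only [hV, Finset.mem_filter, Finset.mem_product] at hx
      obtain ⟨⟨⟨⟨ha1, hb1⟩, hb2, hb3⟩, ⟨hne1, hQ1⟩, hne2, hQ2⟩, hfib⟩ := hx
      subst hfib
      exact Finset.mem_product.mpr ⟨Finset.mem_filter.mpr ⟨hb2, hne1, hQ1⟩,
        Finset.mem_filter.mpr ⟨hb3, hne2, hQ2⟩⟩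
    · intro x hx x' hx' he
      simp only [Finset.mem_filter] at hx hx'
      exact Prod.ext (hx.2.trans hx'.2.symm) he
    · intro dd hdd
      obtain ⟨hd1, hd2⟩ := Finset.mem_product.mp hdd
      obtain ⟨hd1B, hne1, hQ1⟩ := Finset.mem_filter.mp hd1
      obtain ⟨hd2B, hne2, hQ2⟩ := Finset.mem_filter.mp hd2
      refine ⟨(y, dd), Finset.mem_filter.mpr ⟨?_, rfl⟩, rfl⟩
      simp only [hV, Finset.mem_filter, Finset.mem_product]
      obtain ⟨hy1, hy2⟩ := Finset.mem_product.mp hy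
      exact ⟨⟨⟨hy1, hy2⟩, hd1B, hd2B⟩, ⟨hne1, hQ1⟩, hne2, hQ2⟩
  have hVsplit : (V.filter (fun x => x.2.1 = x.2.2)).card
      + (V.filter (fun x => ¬ x.2.1 = x.2.2)).card = V.card :=
    Finset.card_filter_add_card_filter_not _
  have hVd : (V.filter (fun x => x.2.1 = x.2.2)).card = W2.card := by
    apply Finset.card_bij (fun x (_ : x ∈ V.filter (fun x => x.2.1 = x.2.2)) => (x.1, x.2.1))
    · intro x hx
      simp only [hV, Finset.mem_filter, Finset.mem_product] at hx
      obtain ⟨⟨⟨⟨ha1, hb1⟩, hb2, hb3⟩, ⟨hne1, hQ1⟩, hne2, hQ2⟩, hdd⟩ := hx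
      simp only [hW2, hW', Finset.mem_filter, Finset.mem_product]
      exact ⟨⟨⟨⟨ha1, hb1⟩, hb2⟩, hQ1⟩, hne1⟩
    · intro x hx x' hx' he
      simp only [Finset.mem_filter] at hx hx'
      simp only [Prod.mk.injEq] at he
      exact Prod.ext he.1 (Prod.ext he.2 (by rw [← hx.2, ← hx'.2, he.2]))
    · intro w hw
      simp only [hW2, hW', Finset.mem_filter, Finset.mem_product] at hw
      obtain ⟨⟨⟨⟨ha1, hb1⟩, hb2⟩, hQ⟩, hne⟩ := hw
      refine ⟨(w.1, (w.2, w.2)), Finset.mem_filter.mpr ⟨?_, rfl⟩, rfl⟩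
      simp only [hV, Finset.mem_filter, Finset.mem_product]
      exact ⟨⟨⟨ha1, hb1⟩, hb2, hb2⟩, ⟨hne, hQ⟩, hne, hQ⟩
  have hVo : (V.filter (fun x => ¬ x.2.1 = x.2.2)).card ≤ Bf.card * (Bf.card * Bf.card) := by
    have hpc : (Bf ×ˢ (Bf ×ˢ Bf)).card = Bf.card * (Bf.card * Bf.card) := by
      rw [Finset.card_product, Finset.card_product]
    rw [← hpc]
    apply Finset.card_le_card_of_injOn (fun x => (x.1.2, x.2))
    · intro x hx
      simp only [hV, Finset.mem_coe, Finset.mem_filter, Finset.mem_product] at hx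
      obtain ⟨⟨⟨⟨ha1, hb1⟩, hb2, hb3⟩, _⟩, _⟩ := hx
      exact Finset.mem_product.mpr ⟨hb1, Finset.mem_product.mpr ⟨hb2, hb3⟩⟩
    · intro x hx x' hx' he
      simp only [Finset.mem_coe, Finset.mem_filter, hV, Finset.mem_product] at hx hx'
      obtain ⟨⟨⟨⟨ha1, hb1⟩, hb2, hb3⟩, ⟨hne1, hQ1⟩, hne2, hQ2⟩, hdd⟩ := hx
      obtain ⟨⟨⟨⟨ha1', hb1'⟩, hb2', hb3'⟩, ⟨hne1', hQ1'⟩, hne2', hQ2'⟩, hdd'⟩ := hx'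
      simp only [Prod.mk.injEq] at he
      obtain ⟨eb, ed⟩ := he
      rw [← eb, ← ed] at hQ1' hQ2'
      have ea : x.1.1 = x'.1.1 :=
        uniq_a' hsq (hAm _ ha1) (hAm _ ha1') (hBm _ hb1) (hBm _ hb2) (hBm _ hb3)
          hne1 hne2 hdd hQ1 hQ2 hQ1' hQ2'
      exact Prod.ext (Prod.ext ea eb) ed
  -- Branch 2 : fibering over (b, d)
  set n : (((F × F) × F) × ((F × F) × F)) → ℕ :=
    fun y => (Af.filter (fun a => ¬ y.2 = y.1 ∧ QQ F a y.1 y.2)).card with hn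
  have hT2 : W2.card = ∑ y ∈ Bf ×ˢ Bf, n y := by
    rw [Finset.card_eq_sum_card_fiberwise (f := fun x => (x.1.2, x.2)) (t := Bf ×ˢ Bf)
      (fun x hx => by
        simp only [hW2, hW', Finset.mem_coe, Finset.mem_filter, Finset.mem_product] at hx
        exact Finset.mem_product.mpr ⟨hx.1.1.1.2, hx.1.1.2⟩)]
    refine Finset.sum_congr rfl (fun y hy => ?_)
    simp only [hn]
    apply Finset.card_bij (fun x (_ : x ∈ W2.filter (fun x => (x.1.2, x.2) = y)) => x.1.1)
    · intro x hx
      simp only [Finset.mem_filter] at hx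
      obtain ⟨hxW2, hfib⟩ := hx
      simp only [hW2, hW', Finset.mem_filter, Finset.mem_product] at hxW2
      obtain ⟨⟨⟨⟨ha1, hb1⟩, hb2⟩, hQ⟩, hne⟩ := hxW2
      have e1 : x.1.2 = y.1 := by rw [← hfib]
      have e2 : x.2 = y.2 := by rw [← hfib]
      rw [e1, e2] at hQ hne
      exact Finset.mem_filter.mpr ⟨ha1, hne, hQ⟩
    · intro x hx x' hx' he
      simp only [Finset.mem_filter] at hx hx'
      have e1 : x.1.2 = y.1 := by rw [← hx.2]
      have e2 : x.2 = y.2 := by rw [← hx.2]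
      have e1' : x'.1.2 = y.1 := by rw [← hx'.2]
      have e2' : x'.2 = y.2 := by rw [← hx'.2]
      have h1 : x.1 = x'.1 := Prod.ext (show x.1.1 = x'.1.1 from he) (e1.trans e1'.symm)
      exact Prod.ext h1 (e2.trans e2'.symm)
    · intro a ha
      simp only [Finset.mem_filter] at ha
      obtain ⟨haA, hne, hQ⟩ := ha
      refine ⟨((a, y.1), y.2), Finset.mem_filter.mpr ⟨?_, rfl⟩, rfl⟩
      simp only [hW2, hW', Finset.mem_filter, Finset.mem_product]
      obtain ⟨hy1, hy2⟩ := Finset.mem_product.mp hy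
      exact ⟨⟨⟨⟨haA, hy1⟩, hy2⟩, hQ⟩, hne⟩
  set V2 : Finset ((((F × F) × F) × ((F × F) × F)) × (((F × F) × F) × ((F × F) × F))) :=
    ((Bf ×ˢ Bf) ×ˢ (Af ×ˢ Af)).filter (fun x =>
      (¬ x.1.2 = x.1.1 ∧ QQ F x.2.1 x.1.1 x.1.2) ∧
      (¬ x.1.2 = x.1.1 ∧ QQ F x.2.2 x.1.1 x.1.2)) with hV2
  have hV2card : V2.card = ∑ y ∈ Bf ×ˢ Bf, n y * n y := by
    rw [Finset.card_eq_sum_card_fiberwise (f := Prod.fst) (t := Bf ×ˢ Bf) (fun x hx => by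
      simp only [hV2, Finset.mem_coe, Finset.mem_filter, Finset.mem_product] at hx
      exact Finset.mem_product.mpr ⟨hx.1.1.1, hx.1.1.2⟩)]
    refine Finset.sum_congr rfl (fun y hy => ?_)
    simp only [hn]
    rw [← Finset.card_product]
    apply Finset.card_bij (fun x (_ : x ∈ V2.filter (fun x => x.1 = y)) => x.2)
    · intro x hx
      simp only [hV2, Finset.mem_filter, Finset.mem_product] at hx
      obtain ⟨⟨⟨⟨hb1, hb2⟩, ha1, ha2⟩, ⟨hne1, hQ1⟩, hne2, hQ2⟩, hfib⟩ := hx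
      subst hfib
      exact Finset.mem_product.mpr ⟨Finset.mem_filter.mpr ⟨ha1, hne1, hQ1⟩,
        Finset.mem_filter.mpr ⟨ha2, hne2, hQ2⟩⟩
    · intro x hx x' hx' he
      simp only [Finset.mem_filter] at hx hx'
      exact Prod.ext (hx.2.trans hx'.2.symm) he
    · intro aa haa
      obtain ⟨ha1, ha2⟩ := Finset.mem_product.mp haa
      obtain ⟨ha1A, hne1, hQ1⟩ := Finset.mem_filter.mp ha1
      obtain ⟨ha2A, hne2, hQ2⟩ := Finset.mem_filter.mp ha2
      refine ⟨(y, aa), Finset.mem_filter.mpr ⟨?_, rfl⟩, rfl⟩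
      simp only [hV2, Finset.mem_filter, Finset.mem_product]
      obtain ⟨hy1, hy2⟩ := Finset.mem_product.mp hy
      exact ⟨⟨⟨hy1, hy2⟩, ha1A, ha2A⟩, ⟨hne1, hQ1⟩, hne2, hQ2⟩
  have hV2split : (V2.filter (fun x => x.2.1 = x.2.2)).card
      + (V2.filter (fun x => ¬ x.2.1 = x.2.2)).card = V2.card :=
    Finset.card_filter_add_card_filter_not _
  have hV2d : (V2.filter (fun x => x.2.1 = x.2.2)).card = W2.card := by
    apply Finset.card_bij
      (fun x (_ : x ∈ V2.filter (fun x => x.2.1 = x.2.2)) => ((x.2.1, x.1.1), x.1.2))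
    · intro x hx
      simp only [hV2, Finset.mem_filter, Finset.mem_product] at hx
      obtain ⟨⟨⟨⟨hb1, hb2⟩, ha1, ha2⟩, ⟨hne1, hQ1⟩, hne2, hQ2⟩, hdd⟩ := hx
      simp only [hW2, hW', Finset.mem_filter, Finset.mem_product]
      exact ⟨⟨⟨⟨ha1, hb1⟩, hb2⟩, hQ1⟩, hne1⟩
    · intro x hx x' hx' he
      simp only [Finset.mem_filter] at hx hx'
      simp only [Prod.mk.injEq] at he
      obtain ⟨⟨e1, e2⟩, e3⟩ := he
      refine Prod.ext (Prod.ext e2 e3) (Prod.ext e1 ?_)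
      rw [← hx.2, ← hx'.2, e1]
    · intro w hw
      simp only [hW2, hW', Finset.mem_filter, Finset.mem_product] at hw
      obtain ⟨⟨⟨⟨ha1, hb1⟩, hb2⟩, hQ⟩, hne⟩ := hw
      refine ⟨((w.1.2, w.2), (w.1.1, w.1.1)), Finset.mem_filter.mpr ⟨?_, rfl⟩, rfl⟩
      simp only [hV2, Finset.mem_filter, Finset.mem_product]
      exact ⟨⟨⟨hb1, hb2⟩, ha1, ha1⟩, ⟨hne, hQ⟩, hne, hQ⟩
  have hV2o : (V2.filter (fun x => ¬ x.2.1 = x.2.2)).card ≤ Bf.card * (Af.card * Af.card) := by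
    have hpc : (Bf ×ˢ (Af ×ˢ Af)).card = Bf.card * (Af.card * Af.card) := by
      rw [Finset.card_product, Finset.card_product]
    rw [← hpc]
    apply Finset.card_le_card_of_injOn (fun x => (x.1.1, x.2))
    · intro x hx
      simp only [hV2, Finset.mem_coe, Finset.mem_filter, Finset.mem_product] at hx
      obtain ⟨⟨⟨⟨hb1, hb2⟩, ha1, ha2⟩, _⟩, _⟩ := hx
      exact Finset.mem_product.mpr ⟨hb1, Finset.mem_product.mpr ⟨ha1, ha2⟩⟩
    · intro x hx x' hx' he
      simp only [Finset.mem_coe, Finset.mem_filter, hV2, Finset.mem_product] at hx hx'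
      obtain ⟨⟨⟨⟨hb1, hb2⟩, ha1, ha2⟩, ⟨hne1, hQ1⟩, hne2, hQ2⟩, hdd⟩ := hx
      obtain ⟨⟨⟨⟨hb1', hb2'⟩, ha1', ha2'⟩, ⟨hne1', hQ1'⟩, hne2', hQ2'⟩, hdd'⟩ := hx'
      simp only [Prod.mk.injEq] at he
      obtain ⟨eb, ea⟩ := he
      rw [← eb, ← ea] at hQ1' hQ2'
      rw [← eb] at hne1'
      have ed : x.1.2 = x'.1.2 :=
        uniq_d' hsq (hAm _ ha1) (hAm _ ha2) (hBm _ hb1) (hBm _ hb2) (hBm _ hb2')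
          hdd hne1 hne1' hQ1 hQ2 hQ1' hQ2'
      exact Prod.ext (Prod.ext eb ed) ea
  -- Cauchy–Schwarz and the final computation
  have hbase1 : ((Af ×ˢ Bf).card : ℝ) = (Af.card : ℝ) * (Bf.card : ℝ) := by
    rw [Finset.card_product]; push_cast; ring
  have hbase2 : ((Bf ×ˢ Bf).card : ℝ) = (Bf.card : ℝ) * (Bf.card : ℝ) := by
    rw [Finset.card_product]; push_cast; ring
  set x := (Af.card : ℝ) with hxdef
  set yv := (Bf.card : ℝ) with hydef
  set t := (W2.card : ℝ) with htdef
  have hx0 : 0 ≤ x := Nat.cast_nonneg _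
  have hy0 : 0 ≤ yv := Nat.cast_nonneg _
  have ht0 : 0 ≤ t := Nat.cast_nonneg _
  have hAn : ((A.ncard : ℕ) : ℝ) = x := by
    rw [Set.ncard_eq_toFinset_card _ hAfin]
  have hBn : ((B.ncard : ℕ) : ℝ) = yv := by
    rw [Set.ncard_eq_toFinset_card _ hBfin]
  -- first Cauchy–Schwarz inequality
  have hq1 : t ^ 2 ≤ (x * yv) * (t + yv ^ 3) := by
    have hCS := sq_sum_le_card_mul_sum_sq (s := Af ×ˢ Bf) (f := fun y => (k y : ℝ))
    have hsum1 : ∑ y ∈ Af ×ˢ Bf, (k y : ℝ) = t := by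
      rw [htdef, hT1]; push_cast; rfl
    have hsum2 : ∑ y ∈ Af ×ˢ Bf, (k y : ℝ) ^ 2 = (V.card : ℝ) := by
      rw [hVcard]; push_cast
      exact Finset.sum_congr rfl (fun y _ => (sq ((k y : ℝ))))
    rw [hsum1, hsum2, hbase1] at hCS
    have hVle : V.card ≤ W2.card + Bf.card * (Bf.card * Bf.card) := by omega
    have hVleR : (V.card : ℝ) ≤ t + yv ^ 3 := by
      have hc := (Nat.cast_le (α := ℝ)).mpr hVle
      push_cast at hc
      rw [htdef, hydef]
      nlinarith [hc]
    calc t ^ 2 ≤ x * yv * (V.card : ℝ) := hCS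
    _ ≤ (x * yv) * (t + yv ^ 3) := by
        apply mul_le_mul_of_nonneg_left hVleR (mul_nonneg hx0 hy0)
  -- second Cauchy–Schwarz inequality
  have hq2 : t ^ 2 ≤ (yv * yv) * (t + yv * x ^ 2) := by
    have hCS := sq_sum_le_card_mul_sum_sq (s := Bf ×ˢ Bf) (f := fun y => (n y : ℝ))
    have hsum1 : ∑ y ∈ Bf ×ˢ Bf, (n y : ℝ) = t := by
      rw [htdef, hT2]; push_cast; rfl
    have hsum2 : ∑ y ∈ Bf ×ˢ Bf, (n y : ℝ) ^ 2 = (V2.card : ℝ) := by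
      rw [hV2card]; push_cast
      exact Finset.sum_congr rfl (fun y _ => (sq ((n y : ℝ))))
    rw [hsum1, hsum2, hbase2] at hCS
    have hVle : V2.card ≤ W2.card + Bf.card * (Af.card * Af.card) := by omega
    have hVleR : (V2.card : ℝ) ≤ t + yv * x ^ 2 := by
      have hc := (Nat.cast_le (α := ℝ)).mpr hVle
      push_cast at hc
      rw [htdef, hydef, hxdef]
      nlinarith [hc]
    calc t ^ 2 ≤ yv * yv * (V2.card : ℝ) := hCS
    _ ≤ (yv * yv) * (t + yv * x ^ 2) := by
        apply mul_le_mul_of_nonneg_left hVleR (mul_nonneg hy0 hy0)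
  -- the easy bound on the number of quadruples
  have hE : (S.ncard : ℝ) ≤ x * yv + t := by
    have h1 : S.ncard ≤ Af.card * Bf.card + W2.card := by omega
    have hc := (Nat.cast_le (α := ℝ)).mpr h1
    push_cast at hc
    rw [hxdef, hydef, htdef]
    exact hc
  clear_value x yv t
  -- solve the quadratics
  have hb1 : t ≤ x * yv + Real.sqrt x * yv ^ 2 := by
    have h := quad_solve (m := x * yv) (c := yv ^ 3) ht0 (mul_nonneg hx0 hy0) (pow_nonneg hy0 3) hq1
    have hr : Real.sqrt (x * yv * yv ^ 3) = Real.sqrt x * yv ^ 2 := by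
      rw [show x * yv * yv ^ 3 = x * (yv ^ 2) ^ 2 by ring, Real.sqrt_mul hx0,
        Real.sqrt_sq (sq_nonneg yv)]
    rw [hr] at h
    exact h
  have hb2 : t ≤ yv * yv + x * yv * Real.sqrt yv := by
    have h := quad_solve (m := yv * yv) (c := yv * x ^ 2) ht0 (mul_nonneg hy0 hy0) (mul_nonneg hy0 (sq_nonneg x)) hq2
    have hr : Real.sqrt (yv * yv * (yv * x ^ 2)) = x * yv * Real.sqrt yv := by
      rw [show yv * yv * (yv * x ^ 2) = (x * yv) ^ 2 * yv by ring,
        Real.sqrt_mul (sq_nonneg (x * yv)), Real.sqrt_sq (mul_nonneg hx0 hy0)]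
    rw [hr] at h
    exact h
  -- rewrite the goal
  rw [hAn, hBn]
  have hr1 : x ^ ((1 : ℝ)/2) = Real.sqrt x := (Real.sqrt_eq_rpow x).symm
  have hr2 : yv ^ ((3 : ℝ)/2) = yv * Real.sqrt yv := by
    rcases eq_or_lt_of_le hy0 with h0 | h0
    · rw [← h0, Real.zero_rpow (by norm_num), Real.sqrt_zero, mul_zero]
    · rw [show (3 : ℝ)/2 = 1 + 1/2 by norm_num, Real.rpow_add h0, Real.rpow_one,
        ← Real.sqrt_eq_rpow]
  rw [hr1, hr2]
  have hsx0 : 0 ≤ Real.sqrt x := Real.sqrt_nonneg x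
  have hsy0 : 0 ≤ Real.sqrt yv := Real.sqrt_nonneg yv
  have g1 : (S.ncard : ℝ) ≤ 2 * (Real.sqrt x * yv ^ 2 + x * yv) := by
    have h1 : 0 ≤ Real.sqrt x * yv ^ 2 := mul_nonneg hsx0 (sq_nonneg yv)
    linarith
  have hy01 : yv = 0 ∨ 1 ≤ yv := by
    rcases Nat.eq_zero_or_pos Bf.card with h | h
    · left; rw [hydef, h]; exact Nat.cast_zero
    · right; rw [hydef]; exact_mod_cast h
  have g2 : (S.ncard : ℝ) ≤ 2 * (x * (yv * Real.sqrt yv) + yv ^ 2) := by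
    rcases hy01 with hy' | hy1
    · have ht2 : t ^ 2 ≤ 0 := by
        calc t ^ 2 ≤ x * yv * (t + yv ^ 3) := hq1
        _ = 0 := by rw [hy']; ring
      have ht' : t = 0 := by
        have h1 : t ^ 2 = 0 := le_antisymm ht2 (sq_nonneg t)
        exact pow_eq_zero_iff (by norm_num : 2 ≠ 0) |>.mp h1
      have hEz : (S.ncard : ℝ) ≤ 0 := by
        calc (S.ncard : ℝ) ≤ x * yv + t := hE
        _ = 0 := by rw [hy', ht']; ring
      have h1 := mul_nonneg hx0 (mul_nonneg hy0 (Real.sqrt_nonneg yv))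
      have h2 := sq_nonneg yv
      linarith [hEz, h1, h2]
    · have hsy1 : (1 : ℝ) ≤ Real.sqrt yv := by
        rw [← Real.sqrt_one]; exact Real.sqrt_le_sqrt hy1
      have h2' : x * yv ≤ x * yv * Real.sqrt yv := by
        calc x * yv = x * yv * 1 := by ring
        _ ≤ x * yv * Real.sqrt yv := mul_le_mul_of_nonneg_left hsy1 (mul_nonneg hx0 hy0)
      linarith [hE, hb2, h2']
  rcases min_cases (Real.sqrt x * yv ^ 2 + x * yv) (x * (yv * Real.sqrt yv) + yv ^ 2)
    with ⟨hm, _⟩ | ⟨hm, _⟩ <;> rw [hm]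
  · exact g1
  · exact g2
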